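/- Let g ≥ 2 be an integer, let a be a natural number, and let s : ℕ → ℕ be a function. Define the rational numbers σ = -((g+1)/(2g+1))·a + Σ_{h=1}^{⌊g/2⌋} (4h(g-h)/(2g+1) - 1)·(s h) and χ = a + Σ_{h=1}^{⌊g/2⌋} (s h). If a + Σ_{h=1}^{⌊g/2⌋} (s h) > 0, then 3σ + 2χ > 0. -/

import Mathlib

theorem stmt_1 (g : ℤ) (hg : 2 ≤ g) (a : ℕ) (s : ℕ → ℕ)
    (σ χ : ℚ)
    (hσ : σ = -(((g : ℚ) + 1) / (2 * (g : ℚ) + 1)) * (a : ℚ) +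
      ∑ h ∈ Finset.Icc 1 (g.toNat / 2),
        ((4 * (h : ℚ) * ((g : ℚ) - (h : ℚ))) / (2 * (g : ℚ) + 1) - 1) * (s h : ℚ))
    (hχ : χ = (a : ℚ) + ∑ h ∈ Finset.Icc 1 (g.toNat / 2), (s h : ℚ))
    (hpos : 0 < a + ∑ h ∈ Finset.Icc 1 (g.toNat / 2), s h) :
    0 < 3 * σ + 2 * χ := by
  have hgq : (2 : ℚ) ≤ (g : ℚ) := by exact_mod_cast hg
  have hD : (0 : ℚ) < 2 * (g : ℚ) + 1 := by linarith
  have hDne : (2 * (g : ℚ) + 1) ≠ 0 := ne_of_gt hD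
  set c : ℚ := ((g : ℚ) - 1) / (2 * (g : ℚ) + 1) with hc
  have hcpos : 0 < c := div_pos (by linarith) hD
  have expand : 3 * σ + 2 * χ =
      c * (a : ℚ) + ∑ h ∈ Finset.Icc 1 (g.toNat / 2),
        ((12 * (h : ℚ) * ((g : ℚ) - (h : ℚ)) - (2 * (g : ℚ) + 1)) / (2 * (g : ℚ) + 1))
          * (s h : ℚ) := by
    subst hσ hχ
    rw [mul_add, mul_add, Finset.mul_sum, Finset.mul_sum]
    rw [add_add_add_comm, ← Finset.sum_add_distrib]
    congr 1
    · rw [hc]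
      field_simp
      ring
    · apply Finset.sum_congr rfl
      intro h _
      field_simp
      ring
  have hbound : c * ((a : ℚ) + ∑ h ∈ Finset.Icc 1 (g.toNat / 2), (s h : ℚ))
      ≤ 3 * σ + 2 * χ := by
    rw [expand, mul_add, Finset.mul_sum]
    gcongr with h hh
    simp only [Finset.mem_Icc] at hh
    obtain ⟨h1, h2⟩ := hh
    have hx1 : (1 : ℚ) ≤ (h : ℚ) := by exact_mod_cast h1
    have hx2 : 2 * (h : ℚ) ≤ (g : ℚ) := by
      have : 2 * h ≤ g.toNat := by omega
      have hgt : (g.toNat : ℤ) = g := Int.toNat_of_nonneg (by linarith)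
      have : (2 * h : ℤ) ≤ g := by rw [← hgt]; exact_mod_cast this
      exact_mod_cast this
    rw [hc, div_le_div_iff₀ hD hD]
    nlinarith [mul_nonneg (by linarith : (0:ℚ) ≤ (h:ℚ) - 1)
      (by linarith : (0:ℚ) ≤ (g:ℚ) - (h:ℚ) - 1)]
  have hsum : (1 : ℚ) ≤ (a : ℚ) + ∑ h ∈ Finset.Icc 1 (g.toNat / 2), (s h : ℚ) := by
    have h1 : (1:ℕ) ≤ a + ∑ h ∈ Finset.Icc 1 (g.toNat / 2), s h := hpos
    exact_mod_cast h1
  calc (0 : ℚ) < c * ((a : ℚ) + ∑ h ∈ Finset.Icc 1 (g.toNat / 2), (s h : ℚ)) := by positivity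
    _ ≤ 3 * σ + 2 * χ := hbound
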